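/- Let γ ≥ 1, μ > 0, k > 0, s ∈ ℝ, A ∈ ℝ, and let P : ℝ → (0, ∞) be three times continuously differentiable with P(y) → P⁻ > 0, P'(y) → 0 and P''(y) → 0 as y → −∞. Set J = sP − A, J⁻ = sP⁻ − A and B = −sJ⁻ + (J⁻)²/P⁻ + (P⁻)^γ. If the pair (P, J) satisfies −sJ'(y) + d/dy[J(y)²/P(y) + P(y)^γ] = μJ''(y) + (k²/2)·d/dy[P(y)(log P(y))''] for all y ∈ ℝ, then P satisfies the second-order profile equation P''(y) = (2/k²)(P(y)^γ − (As + B) + A²/P(y)) − (2sμ/k²)P'(y) + P'(y)²/P(y) for all y ∈ ℝ. -/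

import Mathlib

/-- a traveling-wave pair `(P, J)`, `J = sP − A`, solving the third-order
momentum profile equation and satisfying `P → P⁻ > 0`, `P' → 0`, `P'' → 0` at `−∞`,
satisfies the second-order profile equation
`P'' = (2/k²)(P^γ − (As + B) + A²/P) − (2sμ/k²)P' + (P')²/P`,
with `B = −sJ⁻ + (J⁻)²/P⁻ + (P⁻)^γ`, `J⁻ = sP⁻ − A`. -/
theorem statement_14 (γ μ k s A Pm : ℝ) (hγ : 1 ≤ γ) (hμ : 0 < μ) (hk : 0 < k)
    (hPm : 0 < Pm)
    (P : ℝ → ℝ) (hP : ContDiff ℝ 3 P) (hpos : ∀ y : ℝ, 0 < P y)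
    (hlim : Filter.Tendsto P Filter.atBot (nhds Pm))
    (hlim' : Filter.Tendsto (deriv P) Filter.atBot (nhds 0))
    (hlim'' : Filter.Tendsto (deriv (deriv P)) Filter.atBot (nhds 0))
    (J : ℝ → ℝ) (hJ : ∀ y : ℝ, J y = s * P y - A)
    (B : ℝ) (hB : B = -s * (s * Pm - A) + (s * Pm - A) ^ 2 / Pm + Pm ^ γ)
    (hODE : ∀ y : ℝ,
      -s * deriv J y + deriv (fun t => (J t) ^ 2 / P t + (P t) ^ γ) y
        = μ * deriv (deriv J) y
          + (k ^ 2 / 2) * deriv (fun t => P t * deriv (deriv (fun u => Real.log (P u))) t) y) :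
    ∀ y : ℝ, deriv (deriv P) y =
      (2 / k ^ 2) * ((P y) ^ γ - (A * s + B) + A ^ 2 / P y)
        - (2 * s * μ / k ^ 2) * deriv P y + (deriv P y) ^ 2 / P y := by
  have hP1 : Differentiable ℝ P := hP.differentiable (by norm_num)
  have hC2 : ContDiff ℝ 2 (deriv P) :=
    ((contDiff_succ_iff_deriv (n := 2)).mp (by norm_num [hP])).2.2
  have hP2 : Differentiable ℝ (deriv P) := hC2.differentiable (by norm_num)
  have hC1 : ContDiff ℝ 1 (deriv (deriv P)) :=
    ((contDiff_succ_iff_deriv (n := 1)).mp (by norm_num [hC2])).2.2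
  have hP3 : Differentiable ℝ (deriv (deriv P)) := hC1.differentiable (by norm_num)
  have hne : ∀ y, P y ≠ 0 := fun y => (hpos y).ne'
  -- J as a function
  have hJfun : J = fun y => s * P y - A := funext hJ
  have hderivJ : deriv J = fun y => s * deriv P y := by
    funext y
    rw [hJfun]
    exact (((hP1 y).hasDerivAt.const_mul s).sub_const A).deriv
  have hderivJ2 : deriv (deriv J) = fun y => s * deriv (deriv P) y := by
    rw [hderivJ]
    funext y
    exact ((hP2 y).hasDerivAt.const_mul s).deriv
  -- log term
  have hlog1 : deriv (fun u => Real.log (P u)) = fun u => deriv P u / P u := by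
    funext u
    exact ((hP1 u).hasDerivAt.log (hne u)).deriv
  have hlog2 : ∀ u, deriv (deriv (fun u => Real.log (P u))) u
      = (deriv (deriv P) u * P u - deriv P u * deriv P u) / (P u) ^ 2 := by
    intro u
    rw [hlog1]
    exact ((hP2 u).hasDerivAt.div (hP1 u).hasDerivAt (hne u)).deriv
  have hQ : (fun t => P t * deriv (deriv (fun u => Real.log (P u))) t)
      = fun t => deriv (deriv P) t - (deriv P t) ^ 2 / P t := by
    funext t
    rw [hlog2 t]
    field_simp [hne t]
  -- differentiability of the pieces
  have hF1diff : ∀ y, DifferentiableAt ℝ (fun t => (J t) ^ 2 / P t + (P t) ^ γ) y := by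
    intro y
    rw [hJfun]
    exact ((((hP1 y).const_mul s).sub_const A).pow 2).div (hP1 y) (hne y) |>.add
      ((hP1 y).rpow_const (Or.inl (hne y)))
  have hF2diff : ∀ y, DifferentiableAt ℝ
      (fun t => deriv (deriv P) t - (deriv P t) ^ 2 / P t) y := by
    intro y
    exact (hP3 y).sub (((hP2 y).pow 2).div (hP1 y) (hne y))
  -- the integrated quantity G
  set G : ℝ → ℝ := fun y => -s * J y + ((J y) ^ 2 / P y + (P y) ^ γ)
      - μ * (s * deriv P y) - (k ^ 2 / 2) * (deriv (deriv P) y - (deriv P y) ^ 2 / P y)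
    with hGdef
  have hGdiff : Differentiable ℝ G := by
    intro y
    have hJd : DifferentiableAt ℝ (fun t => -s * J t) y := by
      have : (fun t => -s * J t) = fun t => -s * (s * P t - A) := by
        funext t; rw [hJ t]
      rw [this]
      exact (((hP1 y).const_mul s).sub_const A).const_mul (-s)
    exact ((hJd.add (hF1diff y)).sub (((hP2 y).const_mul s).const_mul μ)).sub
      ((hF2diff y).const_mul _)
  have hG' : ∀ y, deriv G y = 0 := by
    intro y
    have h1 : HasDerivAt (fun t => -s * J t) (-s * (s * deriv P y)) y := by
      rw [hJfun]
      simpa using (((hP1 y).hasDerivAt.const_mul s).sub_const A).const_mul (-s)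
    have h2 : HasDerivAt (fun t => (J t) ^ 2 / P t + (P t) ^ γ)
        (deriv (fun t => (J t) ^ 2 / P t + (P t) ^ γ) y) y :=
      (hF1diff y).hasDerivAt
    have h3 : HasDerivAt (fun t => μ * (s * deriv P t)) (μ * (s * deriv (deriv P) y)) y :=
      ((hP2 y).hasDerivAt.const_mul s).const_mul μ
    have h4 : HasDerivAt (fun t => (k ^ 2 / 2) * (deriv (deriv P) t - (deriv P t) ^ 2 / P t))
        ((k ^ 2 / 2) * deriv (fun t => deriv (deriv P) t - (deriv P t) ^ 2 / P t) y) y :=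
      ((hF2diff y).hasDerivAt).const_mul _
    have hG : HasDerivAt G
        (-s * (s * deriv P y) + deriv (fun t => (J t) ^ 2 / P t + (P t) ^ γ) y
          - μ * (s * deriv (deriv P) y)
          - (k ^ 2 / 2) * deriv (fun t => deriv (deriv P) t - (deriv P t) ^ 2 / P t) y) y :=
      ((h1.add h2).sub h3).sub h4
    rw [hG.deriv]
    have := hODE y
    rw [hderivJ2, hderivJ, hQ] at this
    simp only at this
    linarith [this]
  have hGconst : ∀ y z : ℝ, G y = G z :=
    is_const_of_deriv_eq_zero hGdiff hG'
  -- limit of G at -∞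
  have hJm : Filter.Tendsto J Filter.atBot (nhds (s * Pm - A)) := by
    rw [hJfun]
    exact (hlim.const_mul s).sub_const A
  have hGlim : Filter.Tendsto G Filter.atBot (nhds B) := by
    have hBval : B = -s * (s * Pm - A) + ((s * Pm - A) ^ 2 / Pm + Pm ^ γ)
        - μ * (s * 0) - (k ^ 2 / 2) * (0 - 0 ^ 2 / Pm) := by
      rw [hB]; ring
    rw [hBval, hGdef]
    exact ((((hJm.const_mul (-s)).add (((hJm.pow 2).div hlim hPm.ne').add
      (hlim.rpow_const (Or.inl hPm.ne')))).sub ((hlim'.const_mul s).const_mul μ)).sub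
      ((hlim''.sub ((hlim'.pow 2).div hlim hPm.ne')).const_mul _))
  have hGB : ∀ y, G y = B := by
    intro y
    have h0 : Filter.Tendsto G Filter.atBot (nhds (G y)) := by
      have : G = fun _ => G y := funext fun z => hGconst z y
      rw [this]
      exact tendsto_const_nhds
    exact tendsto_nhds_unique h0 hGlim
  -- conclude
  intro y
  have h := hGB y
  rw [hGdef] at h
  simp only [hJ y] at h
  have hk2 : (k : ℝ) ^ 2 ≠ 0 := pow_ne_zero 2 hk.ne'
  field_simp [hne y] at h
  field_simp [hne y, hk2]
  linear_combination (-1) * h
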